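/- For a nonempty index 𝐤=(k₁,…,k_r), the following identity holds in ℛ: Σ_{m=0}^{r−1} (−1)^m Σ_{(l₁,…,l_{r−m}) ∈ S_m(𝐤)} Σ_{i=1}^{r−m} (l_i, l_{i+1},…,l_{r−m}, l₁,…,l_{i−1}, 1)⋆ = Σ_{i=1}^{r} [ (k_{i+1},…,k_r, k₁,…,k_i, 1) + (k_{i+1},…,k_r, k₁,…,k_{i−1}, k_i+1) ]. -/

import Mathlib

/-- `ℛ`, the free `ℚ`-vector space on the set of indices (realized as lists of naturals;
indices are the lists all of whose entries are positive). -/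
abbrev RSp : Type := List ℕ →₀ ℚ

/-- Merge an interleaved sequence `a □ b₁ □ b₂ ⋯`: a `true` separator is a plus sign
(the adjacent entries are added together), a `false` separator is a comma. -/
def mergeP : ℕ → List (Bool × ℕ) → List ℕ
  | a, [] => [a]
  | a, (true, b) :: rest => mergeP (a + b) rest
  | a, (false, b) :: rest => a :: mergeP b rest

/-- `𝐤⋆ ∈ ℛ`: the sum over all `2^{r−1}` comma/plus patterns of the merged index. -/
noncomputable def starIdx : List ℕ → RSp
  | [] => 0
  | a :: rest =>
      ∑ s : Fin rest.length → Bool,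
        Finsupp.single (mergeP a ((List.ofFn s).zip rest)) (1 : ℚ)

/-- The sum, over all comma/plus patterns of `𝐤` with exactly `m` plus signs,
of `(merged index)⋆ ∈ ℛ`. -/
noncomputable def starIdxM : List ℕ → ℕ → RSp
  | [], _ => 0
  | a :: rest, m =>
      ∑ s : Fin rest.length → Bool,
        if (List.ofFn s).count true = m then starIdx (mergeP a ((List.ofFn s).zip rest)) else 0

/-- The sum, over all comma/plus patterns of `𝐤` with exactly `m` plus signs,
of the merged index, as an element of `ℛ`. -/
noncomputable def mergeM : List ℕ → ℕ → RSp
  | [], _ => 0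
  | a :: rest, m =>
      ∑ s : Fin rest.length → Bool,
        if (List.ofFn s).count true = m then
          Finsupp.single (mergeP a ((List.ofFn s).zip rest)) (1 : ℚ) else 0

/-- Given a cyclic comma/plus pattern `s` on `𝐤` (`s[i]` sits between the `i`-th and the
`(i+1)`-st entry, cyclically) having at least one comma, merge the cyclically adjacent
entries joined by plus signs, reading the cycle linearly starting right after the first
comma (this fixes a choice of cyclic rotation of the merged index). -/
def cycMerge (K : List ℕ) (s : List Bool) : List ℕ :=
  match K.rotate (s.idxOf false + 1) with
  | [] => []
  | a :: rest => mergeP a ((s.rotate (s.idxOf false + 1)).zip rest)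

/-- `S_m(𝐤) ∈ ℛ`: the sum, over all cyclic comma/plus patterns of `𝐤` with exactly `m`
plus signs, of (a chosen cyclic rotation of) the cyclically merged index. -/
noncomputable def SmDef (K : List ℕ) (m : ℕ) : RSp :=
  ∑ s : Fin K.length → Bool,
    if (List.ofFn s).count true = m then
      Finsupp.single (cycMerge K (List.ofFn s)) (1 : ℚ) else 0

/-- For `M = Σ_𝐤 c_𝐤·𝐤 ∈ ℛ`, the weighted sum `Σ_{𝐤 ∈ M} f(𝐤) := Σ_𝐤 c_𝐤 • f(𝐤)`;
here used with `M = S_m(𝐤)`, giving the notation `Σ_{(l₁,…,l_{r−m}) ∈ S_m(𝐤)} f(l)`. -/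
noncomputable def Ssum (K : List ℕ) (m : ℕ) (f : List ℕ → RSp) : RSp :=
  Finsupp.sum (SmDef K m) fun l c => c • f l

-- chunk 1
lemma mergeP_ne_nil : ∀ (L : List (Bool × ℕ)) (a : ℕ), mergeP a L ≠ []
  | [], a => by simp [mergeP]
  | (true, b) :: r, a => by simpa [mergeP] using mergeP_ne_nil r (a + b)
  | (false, b) :: r, a => by simp [mergeP]

lemma mergeP_add : ∀ (L : List (Bool × ℕ)) (a b : ℕ),
    mergeP (a + b) L = (a + (mergeP b L).headI) :: (mergeP b L).tail
  | [], a, b => by simp [mergeP]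
  | (true, c) :: r, a, b => by
      simp only [mergeP, Nat.add_assoc]
      exact mergeP_add r a (b + c)
  | (false, c) :: r, a, b => by simp [mergeP]

lemma starIdx_single (a : ℕ) : starIdx [a] = Finsupp.single [a] 1 := by
  simp [starIdx, mergeP]

lemma starIdx_cons (a b : ℕ) (l : List ℕ) :
    starIdx (a :: b :: l) = Finsupp.mapDomain (List.cons a) (starIdx (b :: l))
      + starIdx ((a + b) :: l) := by
  have key : ∀ (c : ℕ),
      starIdx (c :: l) = ∑ s : Fin l.length → Bool,
        Finsupp.single (mergeP c ((List.ofFn s).zip l)) (1 : ℚ) := fun c => rfl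
  have lhs : starIdx (a :: b :: l)
      = ∑ p : Bool × (Fin l.length → Bool),
          Finsupp.single (mergeP a ((p.1 :: List.ofFn p.2).zip (b :: l))) (1 : ℚ) := by
    refine Fintype.sum_equiv ((Fin.consEquiv (fun _ => Bool)).symm) _ _ fun s => ?_
    congr 1
    rw [List.ofFn_succ]
    rfl
  rw [lhs, Fintype.sum_prod_type, Fintype.sum_bool]
  have htrue : ∀ s : Fin l.length → Bool,
      mergeP a ((true :: List.ofFn s).zip (b :: l)) = mergeP (a + b) ((List.ofFn s).zip l) :=
    fun s => rfl
  have hfalse : ∀ s : Fin l.length → Bool,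
      mergeP a ((false :: List.ofFn s).zip (b :: l)) = a :: mergeP b ((List.ofFn s).zip l) :=
    fun s => rfl
  simp only [htrue, hfalse]
  rw [add_comm]
  congr 1
  · rw [key b, Finsupp.mapDomain_finset_sum]
    refine Finset.sum_congr rfl fun s _ => ?_
    rw [Finsupp.mapDomain_single]

def lastAdd : List ℕ → List ℕ
  | [] => []
  | [a] => [a + 1]
  | a :: l => a :: lastAdd l

@[simp] lemma lastAdd_singleton (a : ℕ) : lastAdd [a] = [a + 1] := rfl
lemma lastAdd_cons_cons (a b : ℕ) (l : List ℕ) :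
    lastAdd (a :: b :: l) = a :: lastAdd (b :: l) := rfl

lemma lastAdd_append (l : List ℕ) (a : ℕ) : lastAdd (l ++ [a]) = l ++ [a + 1] := by
  induction l with
  | nil => rfl
  | cons x xs ih =>
      cases xs with
      | nil => rfl
      | cons y ys => simpa [lastAdd_cons_cons] using congrArg (x :: ·) ih

lemma keyE1 : ∀ (l : List ℕ) (a : ℕ),
    (∑ t : Fin l.length → Bool, ((-1 : ℚ) ^ ((List.ofFn t).count true)) •
        starIdx (mergeP a ((List.ofFn t).zip l) ++ [1]))
      = Finsupp.single (a :: l ++ [1]) 1 + Finsupp.single (lastAdd (a :: l)) 1 := by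
  intro l
  induction l with
  | nil =>
      intro a
      have h2 : starIdx [a, 1] = Finsupp.single [a, 1] 1 + Finsupp.single [a + 1] 1 := by
        rw [show ([a, 1] : List ℕ) = a :: 1 :: [] from rfl, starIdx_cons, starIdx_single,
          starIdx_single, Finsupp.mapDomain_single]
      simpa [mergeP] using h2
  | cons b l' ih =>
      intro a
      have split : (∑ t : Fin (b :: l').length → Bool, ((-1 : ℚ) ^ ((List.ofFn t).count true)) •
            starIdx (mergeP a ((List.ofFn t).zip (b :: l')) ++ [1]))
          = ∑ p : Bool × (Fin l'.length → Bool),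
              ((-1 : ℚ) ^ ((p.1 :: List.ofFn p.2).count true)) •
                starIdx (mergeP a (((p.1 :: List.ofFn p.2)).zip (b :: l')) ++ [1]) := by
        refine Fintype.sum_equiv ((Fin.consEquiv (fun _ => Bool)).symm) _ _ fun s => ?_
        rw [List.ofFn_succ]
        rfl
      rw [split, Fintype.sum_prod_type, Fintype.sum_bool]
      have cnt_true : ∀ s : Fin l'.length → Bool,
          ((true :: List.ofFn s).count true) = (List.ofFn s).count true + 1 := by
        intro s; simp [List.count_cons]
      have cnt_false : ∀ s : Fin l'.length → Bool,
          ((false :: List.ofFn s).count true) = (List.ofFn s).count true := by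
        intro s; simp [List.count_cons]
      have htrue : (∑ s : Fin l'.length → Bool,
            ((-1 : ℚ) ^ ((true :: List.ofFn s).count true)) •
              starIdx (mergeP a ((true :: List.ofFn s).zip (b :: l')) ++ [1]))
          = - (Finsupp.single ((a + b) :: l' ++ [1]) 1
                + Finsupp.single (lastAdd ((a + b) :: l')) 1) := by
        rw [← ih (a + b), ← Finset.sum_neg_distrib]
        refine Finset.sum_congr rfl fun s _ => ?_
        rw [cnt_true, pow_succ]
        have : mergeP a ((true :: List.ofFn s).zip (b :: l')) = mergeP (a + b) ((List.ofFn s).zip l') := rfl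
        rw [this, show ((-1 : ℚ) ^ ((List.ofFn s).count true) * -1) = -((-1 : ℚ) ^ ((List.ofFn s).count true)) by ring,
          neg_smul]
      have hfalse : (∑ s : Fin l'.length → Bool,
            ((-1 : ℚ) ^ ((false :: List.ofFn s).count true)) •
              starIdx (mergeP a ((false :: List.ofFn s).zip (b :: l')) ++ [1]))
          = Finsupp.mapDomain (List.cons a)
              (Finsupp.single (b :: l' ++ [1]) 1 + Finsupp.single (lastAdd (b :: l')) 1)
            + (Finsupp.single ((a + b) :: l' ++ [1]) 1
                + Finsupp.single (lastAdd ((a + b) :: l')) 1) := by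
        rw [← ih b, ← ih (a + b), Finsupp.mapDomain_finset_sum, ← Finset.sum_add_distrib]
        refine Finset.sum_congr rfl fun s _ => ?_
        rw [cnt_false]
        set M := mergeP b ((List.ofFn s).zip l') with hMdef
        have hMne : M ≠ [] := mergeP_ne_nil _ _
        obtain ⟨c, Mt, hMc⟩ := List.exists_cons_of_ne_nil hMne

        have h1 : mergeP a ((false :: List.ofFn s).zip (b :: l')) ++ [1]
            = a :: c :: (Mt ++ [1]) := by
          show (a :: M) ++ [1] = _
          rw [hMc]; rfl
        rw [h1, starIdx_cons]
        have h2 : c :: (Mt ++ [1]) = M ++ [1] := by rw [hMc]; rfl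
        have h3 : (a + c) :: (Mt ++ [1]) = mergeP (a + b) ((List.ofFn s).zip l') ++ [1] := by
          rw [mergeP_add, ← hMdef, hMc]
          rfl
        rw [h2, h3, smul_add, Finsupp.mapDomain_smul]
      rw [htrue, hfalse]
      have hfin : Finsupp.mapDomain (List.cons a)
            (Finsupp.single (b :: l' ++ [1]) 1 + Finsupp.single (lastAdd (b :: l')) (1 : ℚ))
          = Finsupp.single (a :: b :: l' ++ [1]) 1 + Finsupp.single (lastAdd (a :: b :: l')) 1 := by
        rw [Finsupp.mapDomain_add, Finsupp.mapDomain_single, Finsupp.mapDomain_single,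
          lastAdd_cons_cons]
        simp [List.cons_append]
      rw [← hfin]
      abel

-- chunk 2 : zip / merge structural lemmas and the rotation step
lemma zip_trunc {α β : Type*} : ∀ (p : List α) (l : List β) (v : List α),
    p.length = l.length → (p ++ v).zip l = p.zip l
  | [], [], v, _ => by cases v <;> simp [List.zip]
  | x :: p, y :: l, v, h => by
      simp only [List.cons_append, List.zip_cons_cons]
      rw [zip_trunc p l v (by simpa using h)]

lemma mergeP_append_false : ∀ (X : List (Bool × ℕ)) (a b : ℕ) (Y : List (Bool × ℕ)),
    mergeP a (X ++ (false, b) :: Y) = mergeP a X ++ mergeP b Y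
  | [], a, b, Y => by simp [mergeP]
  | (true, c) :: X, a, b, Y => by
      simp only [List.cons_append, mergeP]
      exact mergeP_append_false X (a + c) b Y
  | (false, c) :: X, a, b, Y => by
      simp only [List.cons_append, mergeP, List.append_eq]
      rw [mergeP_append_false X c b Y]

lemma zip_replicate_true : ∀ (bl : List ℕ),
    (List.replicate bl.length true).zip bl = bl.map (fun x => (true, x))
  | [] => rfl
  | c :: bl => by
      simp only [List.length_cons, List.replicate_succ, List.zip_cons_cons, List.map_cons]
      rw [zip_replicate_true bl]

lemma mergeP_trueRun : ∀ (bl : List ℕ) (a : ℕ) (X : List (Bool × ℕ)),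
    mergeP a (bl.map (fun x => (true, x)) ++ X) = mergeP (a + bl.sum) X
  | [], a, X => by simp [mergeP]
  | c :: bl, a, X => by
      simp only [List.map_cons, List.cons_append, mergeP, List.sum_cons, List.append_eq]
      rw [mergeP_trueRun bl (a + c) X, Nat.add_assoc]

lemma rotate_one_cons {α : Type*} (x : α) (xs : List α) :
    (x :: xs).rotate 1 = xs ++ [x] := by
  rw [show (1 : ℕ) = 0 + 1 from rfl, List.rotate_cons_succ, List.rotate_zero]

lemma step_core (j : ℕ) (bl : List ℕ) (hbl : bl.length = j) (u' : List Bool) (l₂ : List ℕ)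
    (hl : u'.length = l₂.length) (a c : ℕ) :
    (mergeP a ((List.replicate j true ++ false :: (u' ++ [false])).zip (bl ++ c :: l₂))).rotate 1
      = mergeP c ((u' ++ false :: List.replicate j true).zip (l₂ ++ a :: bl)) := by
  subst hbl
  have hz1 : (List.replicate bl.length true ++ false :: (u' ++ [false])).zip (bl ++ c :: l₂)
      = bl.map (fun x => (true, x)) ++ (false, c) :: u'.zip l₂ := by
    rw [List.zip_append (by simp), zip_replicate_true]
    congr 1
    rw [List.zip_cons_cons, zip_trunc u' l₂ [false] hl]
  rw [hz1, mergeP_trueRun, show mergeP (a + bl.sum) ((false, c) :: u'.zip l₂)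
      = (a + bl.sum) :: mergeP c (u'.zip l₂) from rfl, rotate_one_cons]
  have hz2 : (u' ++ false :: List.replicate bl.length true).zip (l₂ ++ a :: bl)
      = u'.zip l₂ ++ (false, a) :: bl.map (fun x => (true, x)) := by
    rw [List.zip_append hl, List.zip_cons_cons, zip_replicate_true]
  rw [hz2, mergeP_append_false,
    ← List.append_nil (List.map (fun x => (true, x)) bl), mergeP_trueRun]
  rfl

-- chunk 3 : wordL and the rotation step
def wordL (K : List ℕ) (S : List Bool) (d : ℕ) : List ℕ :=
  mergeP (K.rotate (d + 1)).headI ((S.rotate (d + 1)).zip (K.rotate (d + 1)).tail)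

lemma cycMerge_eq_wordL (K : List ℕ) (hK : K ≠ []) (S : List Bool) :
    cycMerge K S = wordL K S (S.idxOf false) := by
  have hne : K.rotate (S.idxOf false + 1) ≠ [] := by
    simp [List.rotate_eq_nil_iff, hK]
  obtain ⟨a, rest, h⟩ := List.exists_cons_of_ne_nil hne
  unfold cycMerge wordL
  rw [h]
  rfl

lemma indexOf_le_of_getD : ∀ (S : List Bool) (d : ℕ), d < S.length →
    S.getD d true = false → S.idxOf false ≤ d
  | [], d, h, _ => by simp at h
  | b :: S, 0, _, hg => by
      have hb : b = false := by simpa using hg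
      subst hb
      simp [List.idxOf_cons]
  | b :: S, d + 1, h, hg => by
      cases b with
      | false => simp [List.idxOf_cons]
      | true =>
          have ih := indexOf_le_of_getD S d (by simpa using h) (by simpa using hg)
          simp only [List.idxOf_cons]
          norm_num
          omega

lemma getD_rotate {α : Type*} (l : List α) (x : α) (n i : ℕ) (hi : i < l.length) :
    (l.rotate n).getD i x = l.getD ((i + n) % l.length) x := by
  have h1 : i < (l.rotate n).length := by simpa using hi
  have h0 : 0 < l.length := by omega
  have h2 : (i + n) % l.length < l.length := Nat.mod_lt _ h0
  rw [List.getD_eq_getElem _ _ h1, List.getD_eq_getElem _ _ h2, List.getElem_rotate]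

lemma rotate_getLast (S : List Bool) (d : ℕ) (hd : d < S.length) (hne : S.rotate (d + 1) ≠ []) :
    (S.rotate (d + 1)).getLast hne = S.getD d true := by
  rw [List.getLast_eq_getElem, ← List.getD_eq_getElem _ true,
    getD_rotate S true (d + 1) _ (by rw [List.length_rotate]; omega)]
  rw [List.length_rotate, show S.length - 1 + (d + 1) = S.length + d by omega,
    Nat.add_mod_left, Nat.mod_eq_of_lt hd]

lemma eq_dropLast_append {α : Type*} (l : List α) (x : α) (h : l.getLast? = some x) :
    l = l.dropLast ++ [x] := by
  have hne : l ≠ [] := by intro hl; rw [hl] at h; simp at h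
  have h2 := List.getLast?_eq_getLast hne
  rw [h2] at h
  injection h with h
  conv_lhs => rw [← List.dropLast_append_getLast hne]
  rw [h]

lemma rotate_decomp (S : List Bool) (d d' : ℕ) (hdd' : d < d') (hd' : d' < S.length)
    (hfalse' : S.getD d' true = false)
    (hmid : ∀ e, d < e → e < d' → S.getD e true = true) :
    S.rotate (d + 1)
      = List.replicate (d' - d - 1) true ++ false :: (S.rotate (d + 1)).drop (d' - d) := by
  have hlenrot : (S.rotate (d + 1)).length = S.length := by simp
  conv_lhs => rw [← List.take_append_drop (d' - d - 1) (S.rotate (d + 1))]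
  congr 1
  · apply List.eq_replicate_iff.mpr
    refine ⟨by rw [List.length_take, hlenrot]; omega, ?_⟩
    intro b hb
    obtain ⟨p, hp, hpe⟩ := List.mem_iff_getElem.mp hb
    have hp' : p < d' - d - 1 := by
      rw [List.length_take, hlenrot] at hp
      omega
    rw [List.getElem_take, ← List.getD_eq_getElem _ true] at hpe
    rw [getD_rotate S true _ p (by omega)] at hpe
    rw [Nat.mod_eq_of_lt (by omega)] at hpe
    rw [← hpe]
    exact hmid (p + (d + 1)) (by omega) (by omega)
  · have hjlt : d' - d - 1 < (S.rotate (d + 1)).length := by rw [List.length_rotate]; omega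
    rw [← List.getElem_cons_drop hjlt]
    have h1 : (S.rotate (d + 1))[d' - d - 1]'hjlt = false := by
      rw [← List.getD_eq_getElem _ true, getD_rotate S true _ _ (by omega),
        Nat.mod_eq_of_lt (by omega), show d' - d - 1 + (d + 1) = d' by omega]
      exact hfalse'
    rw [h1, show d' - d - 1 + 1 = d' - d by omega]

lemma wordL_step (K : List ℕ) (S : List Bool) (hlen : S.length = K.length)
    (d d' : ℕ) (hdd' : d < d') (hd' : d' < K.length)
    (hfd : S.getD d true = false) (hfd' : S.getD d' true = false)
    (hmid : ∀ e, d < e → e < d' → S.getD e true = true) :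
    wordL K S d' = (wordL K S d).rotate 1 := by
  have hr2 : 2 ≤ K.length := by omega
  set j := d' - d - 1 with hj
  have hAlen : (K.rotate (d + 1)).length = K.length := by simp
  have hAne : K.rotate (d + 1) ≠ [] := by
    intro h
    have := congrArg List.length h
    rw [List.length_rotate, List.length_nil] at this
    omega
  obtain ⟨a, T, hat⟩ := List.exists_cons_of_ne_nil hAne
  have hTlen : T.length = K.length - 1 := by
    have := hAlen; rw [hat] at this; simp at this; omega
  have hjT : j < T.length := by omega
  have hdropne : T.drop j ≠ [] := by
    intro h
    have := congrArg List.length h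
    rw [List.length_drop, hTlen] at this
    simp at this; omega
  obtain ⟨c, l₂, hdrop⟩ := List.exists_cons_of_ne_nil hdropne
  have hT : T = T.take j ++ c :: l₂ := by rw [← hdrop, List.take_append_drop]
  have hbllen : (T.take j).length = j := by rw [List.length_take]; omega
  have hl₂len : l₂.length = K.length - j - 2 := by
    have := congrArg List.length hdrop
    rw [List.length_drop, hTlen] at this
    simp at this; omega
  -- S side
  have hS : S.rotate (d + 1)
      = List.replicate j true ++ false :: (S.rotate (d + 1)).drop (d' - d) :=
    rotate_decomp S d d' hdd' (by omega) hfd' hmid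
  set u := (S.rotate (d + 1)).drop (d' - d) with hu
  have hulen : u.length = K.length - j - 1 := by
    rw [hu, List.length_drop, List.length_rotate, hlen]; omega
  have hune : u ≠ [] := by
    intro h; rw [h] at hulen; simp at hulen; omega
  have hrne : S.rotate (d + 1) ≠ [] := by
    intro h
    have := congrArg List.length h
    rw [List.length_rotate, List.length_nil] at this
    omega
  have hlast? : (S.rotate (d + 1)).getLast? = some false := by
    rw [List.getLast?_eq_getLast hrne, rotate_getLast S d (by rw [hlen]; omega) hrne, hfd]
  have hulast? : u.getLast? = some false := by
    rw [hS, show List.replicate j true ++ false :: u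
        = (List.replicate j true ++ [false]) ++ u by simp,
      List.getLast?_append_of_ne_nil _ hune] at hlast?
    exact hlast?
  set u' := u.dropLast with hu'
  have huu : u = u' ++ [false] := eq_dropLast_append u false hulast?
  have hu'len : u'.length = K.length - j - 2 := by
    rw [hu', List.length_dropLast, hulen]; omega
  have key := step_core j (T.take j) hbllen u' l₂ (hu'len.trans hl₂len.symm) a c
  have hword_d : wordL K S d
      = mergeP a ((List.replicate j true ++ false :: (u' ++ [false])).zip (T.take j ++ c :: l₂)) := by
    unfold wordL
    rw [hat, hS, huu, ← hT]
    rfl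
  have hd'1 : d' + 1 = (d + 1) + (j + 1) := by omega
  have hrotK : K.rotate (d' + 1) = (c :: l₂) ++ a :: T.take j := by
    rw [hd'1, ← List.rotate_rotate, hat, hT,
      show a :: (T.take j ++ c :: l₂) = (a :: T.take j) ++ (c :: l₂) by simp,
      List.rotate_eq_drop_append_take (by simp only [List.length_append, List.length_cons, hbllen]; omega)]
    rw [show j + 1 = (a :: T.take j).length + 0 by simp [hbllen], List.drop_append,
      List.take_append]
    simp
    simp [Nat.min_eq_left hjT.le, List.drop_eq_nil_of_le, List.take_of_length_le, hbllen]
  have hrotS : S.rotate (d' + 1) = (u' ++ false :: List.replicate j true) ++ [false] := by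
    rw [hd'1, ← List.rotate_rotate, hS,
      show List.replicate j true ++ false :: u = (List.replicate j true ++ [false]) ++ u by simp,
      List.rotate_eq_drop_append_take (by simp only [List.length_append, List.length_replicate, List.length_cons, hulen]; omega)]
    rw [show j + 1 = (List.replicate j true ++ [false]).length + 0 by simp, List.drop_append,
      List.take_append]
    rw [huu]
    simp
    simp [List.drop_eq_nil_of_le, List.take_of_length_le]
  have hword_d' : wordL K S d'
      = mergeP c ((u' ++ false :: List.replicate j true).zip (l₂ ++ a :: T.take j)) := by
    unfold wordL
    rw [hrotK, hrotS]
    have hzt : ((u' ++ false :: List.replicate j true) ++ [false]).zip ((c :: (l₂ ++ a :: T.take j)).tail)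
        = (u' ++ false :: List.replicate j true).zip (l₂ ++ a :: T.take j) := by
      show ((u' ++ false :: List.replicate j true) ++ [false]).zip (l₂ ++ a :: T.take j) = _
      apply zip_trunc
      all_goals simp only [List.length_append, List.length_cons, List.length_replicate,
        hu'len, hl₂len, hbllen]
      all_goals omega
    rw [show ((c :: l₂) ++ a :: T.take j) = c :: (l₂ ++ a :: T.take j) by simp] at *
    rw [hzt]
    rfl
  rw [hword_d', hword_d, key]

-- chunk 4 : counting and the cyclic reindexing
lemma count_bool (S : List Bool) : S.count true + S.count false = S.length := by
  simpa [List.count] using (List.length_eq_countP_add_countP (· == true) (l := S)).symm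

lemma card_filter_eq_count (S : List Bool) :
    ((Finset.range S.length).filter fun d => S.getD d true = false).card
      = S.count false := by
  induction S using List.reverseRecOn with
  | nil => simp
  | append_singleton l b ih =>
      rw [List.length_append, List.length_singleton, Finset.range_add_one, Finset.filter_insert]
      have hpred : ∀ d ∈ Finset.range l.length,
          ((l ++ [b]).getD d true = false) = (l.getD d true = false) := by
        intro d hd
        rw [Finset.mem_range] at hd
        rw [List.getD_eq_getElem _ _ (by simp; omega), List.getD_eq_getElem _ _ hd,
          List.getElem_append_left hd]
      have hfilter : (Finset.range l.length).filter (fun d => (l ++ [b]).getD d true = false)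
          = (Finset.range l.length).filter (fun d => l.getD d true = false) := by
        apply Finset.filter_congr
        intro d hd
        rw [hpred d hd]
      have hlast : (l ++ [b]).getD l.length true = b := by
        rw [List.getD_eq_getElem _ _ (by simp)]
        simp
      rw [hlast, List.count_append]
      cases b with
      | false =>
          rw [if_pos rfl, Finset.card_insert_of_notMem (by simp), hfilter, ih]
          simp
      | true =>
          rw [if_neg (by simp), hfilter, ih]
          simp

lemma word_rot (K : List ℕ) (S : List Bool) (hK : K ≠ []) (hlen : S.length = K.length)
    (hf : false ∈ S)
    (D : Finset ℕ) (hD : D = (Finset.range K.length).filter fun d => S.getD d true = false)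
    (mono : Fin D.card ≃o {x // x ∈ D}) :
    ∀ (i : ℕ) (h : i < D.card),
      (cycMerge K S).rotate i = wordL K S (mono ⟨i, h⟩ : ℕ) := by
  have hmemD : ∀ d, d ∈ D ↔ d < K.length ∧ S.getD d true = false := by
    intro d; rw [hD, Finset.mem_filter, Finset.mem_range]
  have hmono_lt : ∀ (i j : Fin D.card), i < j → ((mono i : ℕ) < (mono j : ℕ)) := by
    intro i j hij
    exact_mod_cast (OrderIso.lt_iff_lt mono).mpr hij
  intro i
  induction i with
  | zero =>
      intro h
      rw [List.rotate_zero, cycMerge_eq_wordL K hK S]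
      congr 1
      have hidx : S.idxOf false ∈ D := by
        rw [hmemD]
        have h1 : S.idxOf false < S.length := List.idxOf_lt_length_iff.mpr hf
        refine ⟨by omega, ?_⟩
        rw [List.getD_eq_getElem _ _ h1]
        exact List.getElem_idxOf h1
      obtain ⟨j, hj⟩ := mono.surjective ⟨S.idxOf false, hidx⟩
      apply le_antisymm
      · have := (hmemD _).mp (mono ⟨0, h⟩).2
        exact indexOf_le_of_getD S _ (by omega) this.2
      · have h0j : (⟨0, h⟩ : Fin D.card) ≤ j := Fin.mk_le_of_le_val (Nat.zero_le _)
        have := mono.monotone h0j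
        have h2 : ((mono ⟨0, h⟩ : {x // x ∈ D}) : ℕ) ≤ ((mono j : {x // x ∈ D}) : ℕ) := this
        rw [hj] at h2
        exact h2
  | succ i ih =>
      intro h
      have hi : i < D.card := by omega
      have hstep : wordL K S (mono ⟨i + 1, h⟩ : ℕ) = (wordL K S (mono ⟨i, hi⟩ : ℕ)).rotate 1 := by
        set x := (mono ⟨i, hi⟩ : ℕ) with hx
        set y := (mono ⟨i + 1, h⟩ : ℕ) with hy
        have hxy : x < y := hmono_lt _ _ (by simp)
        have hxD := (hmemD _).mp (mono ⟨i, hi⟩).2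
        have hyD := (hmemD _).mp (mono ⟨i + 1, h⟩).2
        refine wordL_step K S hlen x y hxy hyD.1 hxD.2 hyD.2 ?_
        intro e hxe hey
        by_contra hgf
        have he : e ∈ D := by
          rw [hmemD]
          refine ⟨by omega, ?_⟩
          cases hgd : S.getD e true
          · rfl
          · exact absurd hgd hgf
        obtain ⟨je, hje⟩ := mono.surjective ⟨e, he⟩
        have h1 : (⟨i, hi⟩ : Fin D.card) < je := by
          rw [← OrderIso.lt_iff_lt mono]
          show (mono ⟨i, hi⟩ : {x // x ∈ D}) < mono je
          rw [hje]
          exact Subtype.mk_lt_mk.mpr hxe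
        have h2 : je < (⟨i + 1, h⟩ : Fin D.card) := by
          rw [← OrderIso.lt_iff_lt mono]
          show (mono je : {x // x ∈ D}) < mono ⟨i + 1, h⟩
          rw [hje]
          exact Subtype.mk_lt_mk.mpr hey
        have : i < (je : ℕ) := h1
        have : (je : ℕ) < i + 1 := h2
        omega
      rw [hstep, ← ih hi, List.rotate_rotate]

lemma cyclic_sum_eq {M : Type*} [AddCommMonoid M] (g : List ℕ → M)
    (K : List ℕ) (S : List Bool) (hK : K ≠ []) (hlen : S.length = K.length)
    (hf : false ∈ S) :
    (∑ i ∈ Finset.range (S.count false), g ((cycMerge K S).rotate i))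
      = ∑ d ∈ (Finset.range K.length).filter (fun d => S.getD d true = false),
          g (wordL K S d) := by
  set D := (Finset.range K.length).filter (fun d => S.getD d true = false) with hD
  have hcard : D.card = S.count false := by
    rw [hD, ← card_filter_eq_count S, hlen]
  set mono := D.orderIsoOfFin rfl with hmono
  have hsum : (∑ d ∈ D, g (wordL K S d)) = ∑ i : Fin D.card, g (wordL K S (mono i : ℕ)) := by
    rw [← Finset.sum_coe_sort D (fun d => g (wordL K S d))]
    exact (Fintype.sum_equiv mono.toEquiv _ _ fun i => rfl).symm
  rw [hsum, ← hcard]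
  rw [← Fin.sum_univ_eq_sum_range (fun i => g ((cycMerge K S).rotate i)) D.card]
  refine Finset.sum_congr rfl fun i _ => ?_
  rw [word_rot K S hK hlen hf D hD mono i i.isLt]

open Fin.NatCast

-- chunk 5 : per-cut evaluation
lemma keyE1' (n : ℕ) (l : List ℕ) (hl : l.length = n) (a : ℕ) :
    (∑ t : Fin n → Bool, ((-1 : ℚ) ^ ((List.ofFn t).count true)) •
        starIdx (mergeP a ((List.ofFn t).zip l) ++ [1]))
      = Finsupp.single (a :: l ++ [1]) 1 + Finsupp.single (lastAdd (a :: l)) 1 := by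
  subst hl
  exact keyE1 l a

lemma ofFn_rotate {n : ℕ} (f : Fin (n + 1) → Bool) (m : ℕ) :
    (List.ofFn f).rotate m = List.ofFn (fun i => f (i + (m : Fin (n + 1)))) := by
  apply List.ext_getElem (by simp)
  intro i h1 h2
  rw [List.getElem_rotate, List.getElem_ofFn, List.getElem_ofFn]
  congr 1
  apply Fin.ext
  simp only [Fin.add_def, Fin.val_natCast, List.length_ofFn]
  simp [Nat.add_mod]

lemma perD (n : ℕ) (K : List ℕ) (hn : K.length = n + 1) (d : ℕ) (hd : d < n + 1) :
    (∑ s : Fin (n + 1) → Bool,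
        if (List.ofFn s).getD d true = false then
          ((-1 : ℚ) ^ ((List.ofFn s).count true)) • starIdx (wordL K (List.ofFn s) d ++ [1])
        else 0)
      = Finsupp.single (K.rotate (d + 1) ++ [1]) 1
          + Finsupp.single (lastAdd (K.rotate (d + 1))) 1 := by
  set c : Fin (n + 1) := ((d + 1 : ℕ) : Fin (n + 1)) with hc
  set e : (Fin (n + 1) → Bool) → (Fin (n + 1) → Bool) := fun s i => s (i - c) with he
  have hbij : Function.Bijective e := by
    constructor
    · intro s t hst
      funext i
      have h1 := congrFun hst (i + c)
      simpa [he, add_sub_cancel_right] using h1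
    · intro t
      refine ⟨fun i => t (i + c), ?_⟩
      funext i
      simp [he, sub_add_cancel]
  have hrot : ∀ s : Fin (n + 1) → Bool, (List.ofFn (e s)).rotate (d + 1) = List.ofFn s := by
    intro s
    rw [ofFn_rotate]
    congr 1
    funext i
    simp only [he, ← hc, add_sub_cancel_right]
  have hcnt : ∀ s : Fin (n + 1) → Bool,
      (List.ofFn (e s)).count true = (List.ofFn s).count true := by
    intro s
    conv_rhs => rw [← hrot s]
    exact ((List.rotate_perm _ _).count_eq _).symm
  have hgetD : ∀ f : Fin (n + 1) → Bool, (List.ofFn f).getD d true = f ⟨d, hd⟩ := by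
    intro f
    rw [List.getD_eq_getElem _ _ (by simpa using hd), List.getElem_ofFn]
  have hsub : (⟨d, hd⟩ : Fin (n + 1)) - c = Fin.last n := by
    apply Fin.ext
    simp only [Fin.sub_def, hc, Fin.val_natCast, Fin.val_last]
    rcases Nat.lt_or_ge (d + 1) (n + 1) with h | h
    · rw [Nat.mod_eq_of_lt h, show n + 1 - (d + 1) + d = n by omega, Nat.mod_eq_of_lt (by omega)]
    · have hdn : d = n := by omega
      subst hdn
      rw [Nat.mod_self, Nat.sub_zero, Nat.add_mod_left, Nat.mod_eq_of_lt (by omega)]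
  have hGe : ∀ s : Fin (n + 1) → Bool,
      (if (List.ofFn (e s)).getD d true = false then
          ((-1 : ℚ) ^ ((List.ofFn (e s)).count true)) •
            starIdx (wordL K (List.ofFn (e s)) d ++ [1])
        else 0)
        = (if s (Fin.last n) = false then
            ((-1 : ℚ) ^ ((List.ofFn s).count true)) •
              starIdx (mergeP (K.rotate (d + 1)).headI
                ((List.ofFn s).zip (K.rotate (d + 1)).tail) ++ [1])
          else 0) := by
    intro s
    rw [hgetD (e s)]
    have h1 : e s ⟨d, hd⟩ = s (Fin.last n) := by
      show s (⟨d, hd⟩ - c) = s (Fin.last n)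
      rw [hsub]
    rw [h1, hcnt s]
    simp only [wordL, hrot s]
  rw [← Fintype.sum_bijective e hbij _ _ (fun s => rfl)]
  simp only [hGe]
  -- split off the last component
  rw [← Fintype.sum_equiv (Fin.snocEquiv (fun _ => Bool)) _
      (fun s => (if s (Fin.last n) = false then
            ((-1 : ℚ) ^ ((List.ofFn s).count true)) •
              starIdx (mergeP (K.rotate (d + 1)).headI
                ((List.ofFn s).zip (K.rotate (d + 1)).tail) ++ [1])
          else 0)) (fun p => rfl)]
  rw [Fintype.sum_prod_type, Fintype.sum_bool]
  have hofsnoc : ∀ (t : Fin n → Bool) (b : Bool),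
      List.ofFn (Fin.snoc t b : Fin (n + 1) → Bool) = List.ofFn t ++ [b] := by
    intro t b
    rw [List.ofFn_succ']
    have h2 : (fun i : Fin n => (Fin.snoc t b : Fin (n + 1) → Bool) i.castSucc) = t := by
      funext i
      simp
    rw [List.concat_eq_append]
    congr 1
    · rw [h2]
    · rw [Fin.snoc_last]
  have htruepart : (∑ t : Fin n → Bool,
      (if (Fin.snocEquiv (fun _ => Bool) (true, t)) (Fin.last n) = false then
          ((-1 : ℚ) ^ ((List.ofFn (Fin.snocEquiv (fun _ => Bool) (true, t))).count true)) •
            starIdx (mergeP (K.rotate (d + 1)).headI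
              ((List.ofFn (Fin.snocEquiv (fun _ => Bool) (true, t))).zip
                (K.rotate (d + 1)).tail) ++ [1])
        else 0)) = 0 := by
    apply Finset.sum_eq_zero
    intro t _
    rw [if_neg]
    show ¬ (Fin.snoc t true : Fin (n + 1) → Bool) (Fin.last n) = false
    rw [Fin.snoc_last]
    simp
  rw [htruepart, zero_add]
  have hKrotlen : (K.rotate (d + 1)).length = n + 1 := by
    rw [List.length_rotate, hn]
  have hKrotne : K.rotate (d + 1) ≠ [] := by
    intro h; rw [h] at hKrotlen; simp at hKrotlen
  obtain ⟨a0, A', hA⟩ := List.exists_cons_of_ne_nil hKrotne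
  have hA'len : A'.length = n := by
    have := hKrotlen; rw [hA] at this; simp at this; omega
  have hfalsepart : ∀ t : Fin n → Bool,
      (if (Fin.snocEquiv (fun _ => Bool) (false, t)) (Fin.last n) = false then
          ((-1 : ℚ) ^ ((List.ofFn (Fin.snocEquiv (fun _ => Bool) (false, t))).count true)) •
            starIdx (mergeP (K.rotate (d + 1)).headI
              ((List.ofFn (Fin.snocEquiv (fun _ => Bool) (false, t))).zip
                (K.rotate (d + 1)).tail) ++ [1])
        else 0)
      = ((-1 : ℚ) ^ ((List.ofFn t).count true)) •
          starIdx (mergeP a0 ((List.ofFn t).zip A') ++ [1]) := by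
    intro t
    have hcond : (Fin.snocEquiv (fun _ => Bool) (false, t)) (Fin.last n) = false := by
      show (Fin.snoc t false : Fin (n + 1) → Bool) (Fin.last n) = false
      simp
    rw [if_pos hcond]
    have h3 : List.ofFn (Fin.snocEquiv (fun _ => Bool) (false, t)) = List.ofFn t ++ [false] :=
      hofsnoc t false
    rw [h3, hA]
    have h4 : (List.ofFn t ++ [false]).count true = (List.ofFn t).count true := by
      rw [List.count_append]; simp
    rw [h4]
    have h5 : (List.ofFn t ++ [false]).zip ((a0 :: A').tail) = (List.ofFn t).zip A' := by
      show (List.ofFn t ++ [false]).zip A' = _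
      exact zip_trunc _ _ _ (by simp [hA'len])
    rw [h5]
    rfl
  rw [Finset.sum_congr rfl (fun t _ => hfalsepart t)]
  rw [keyE1' n A' hA'len a0, hA]


/-- **Proposition 6.6** of Hirose–Murahara–Ono: for a nonempty index `𝐤 = (k₁,…,k_r)`,
`Σ_{m=0}^{r−1} (−1)^m Σ_{(l₁,…,l_{r−m}) ∈ S_m(𝐤)} Σ_{i=1}^{r−m}
   (l_i, l_{i+1},…,l_{r−m}, l₁,…,l_{i−1}, 1)⋆
 = Σ_{i=1}^{r} [(k_{i+1},…,k_r, k₁,…,k_i, 1) + (k_{i+1},…,k_r, k₁,…,k_{i−1}, k_i+1)]`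
holds in `ℛ`. -/
theorem prop3_cyclic (K : List ℕ) (hne : K ≠ []) (hpos : ∀ x ∈ K, 0 < x) :
    (∑ m ∈ Finset.range K.length, (-1 : ℚ) ^ m •
        Ssum K m fun l => ∑ i ∈ Finset.range (K.length - m),
          starIdx (l.rotate i ++ [1]))
      = ∑ i ∈ Finset.range K.length,
          (Finsupp.single (K.rotate (i + 1) ++ [1]) (1 : ℚ)
            + Finsupp.single ((K.rotate i).tail ++ [(K.rotate i).headI + 1]) (1 : ℚ)) := by
    classical
  obtain ⟨k0, K', rfl⟩ : ∃ k0 K', K = k0 :: K' := by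
    cases K with
    | nil => exact absurd rfl hne
    | cons k0 K' => exact ⟨k0, K', rfl⟩
  set K := k0 :: K' with hK
  have hssum : ∀ (m : ℕ) (f : List ℕ → RSp),
      Ssum K m f = ∑ s : Fin K.length → Bool,
        (if (List.ofFn s).count true = m then f (cycMerge K (List.ofFn s)) else 0) := by
    intro m f
    unfold Ssum SmDef
    rw [← Finsupp.sum_finset_sum_index (fun a => zero_smul ℚ (f a))
        (fun a b₁ b₂ => add_smul b₁ b₂ (f a))]
    refine Finset.sum_congr rfl fun s _ => ?_
    split_ifs with h
    · rw [Finsupp.sum_single_index (a := cycMerge K (List.ofFn s)) (b := (1 : ℚ))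
          (h := fun l c => c • f l) (zero_smul ℚ _), one_smul]
    · rw [Finsupp.sum_zero_index]
  have hL1 : (∑ m ∈ Finset.range K.length, (-1 : ℚ) ^ m •
        Ssum K m fun l => ∑ i ∈ Finset.range (K.length - m),
          starIdx (l.rotate i ++ [1]))
      = ∑ s : Fin K.length → Bool, ∑ m ∈ Finset.range K.length,
          (if (List.ofFn s).count true = m then
            (-1 : ℚ) ^ m • ∑ i ∈ Finset.range (K.length - m),
              starIdx ((cycMerge K (List.ofFn s)).rotate i ++ [1]) else 0) := by
    refine (Finset.sum_congr rfl fun m _ => ?_).trans Finset.sum_comm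
    rw [hssum m _, Finset.smul_sum]
    refine Finset.sum_congr rfl fun s _ => ?_
    rw [smul_ite, smul_zero]
  have hL2 : ∀ s : Fin K.length → Bool,
      (∑ m ∈ Finset.range K.length, (if (List.ofFn s).count true = m then
          (-1 : ℚ) ^ m • ∑ i ∈ Finset.range (K.length - m),
            starIdx ((cycMerge K (List.ofFn s)).rotate i ++ [1]) else 0))
      = ∑ d ∈ Finset.range K.length,
          (if (List.ofFn s).getD d true = false then
            ((-1 : ℚ) ^ ((List.ofFn s).count true)) •
              starIdx (wordL K (List.ofFn s) d ++ [1]) else 0) := by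
    intro s
    rw [Finset.sum_ite_eq (Finset.range K.length) ((List.ofFn s).count true)
        (fun m => (-1 : ℚ) ^ m • ∑ i ∈ Finset.range (K.length - m),
          starIdx ((cycMerge K (List.ofFn s)).rotate i ++ [1]))]
    have hSlen : (List.ofFn s).length = K.length := List.length_ofFn (f := s)
    by_cases hc : (List.ofFn s).count true ∈ Finset.range K.length
    · rw [if_pos hc]
      rw [Finset.mem_range] at hc
      have hf : false ∈ List.ofFn s := by
        by_contra hnf
        have hall : ∀ b ∈ List.ofFn s, true = b := by
          intro b hb
          cases b
          · exact absurd hb hnf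
          · rfl
        have := List.count_eq_length.mpr hall
        omega
      have hrange : K.length - (List.ofFn s).count true = (List.ofFn s).count false := by
        have h1 := count_bool (List.ofFn s); omega
      rw [hrange, cyclic_sum_eq (fun w => starIdx (w ++ [1])) K (List.ofFn s) hne hSlen hf,
        Finset.smul_sum, Finset.sum_filter]
    · rw [if_neg hc]
      rw [Finset.mem_range, not_lt] at hc
      have hcnt : (List.ofFn s).count true = (List.ofFn s).length := by
        have := List.count_le_length (a := true) (l := List.ofFn s); omega
      have hall := List.count_eq_length.mp hcnt
      symm
      apply Finset.sum_eq_zero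
      intro d hd
      rw [Finset.mem_range] at hd
      rw [if_neg]
      intro hgd
      have hmem : (List.ofFn s).getD d true ∈ List.ofFn s := by
        rw [List.getD_eq_getElem _ _ (by omega)]
        exact List.getElem_mem _
      have h2 := hall _ hmem
      rw [hgd] at h2
      simp at h2
  rw [hL1, Finset.sum_congr rfl (fun s _ => hL2 s), Finset.sum_comm]
  refine Finset.sum_congr rfl fun d hd => ?_
  rw [Finset.mem_range] at hd
  have hkey := perD K'.length K rfl d (by simpa [hK] using hd)
  rw [show (∑ s : Fin K.length → Bool,
      (if (List.ofFn s).getD d true = false then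
        ((-1 : ℚ) ^ ((List.ofFn s).count true)) •
          starIdx (wordL K (List.ofFn s) d ++ [1]) else 0))
    = (∑ s : Fin (K'.length + 1) → Bool,
      (if (List.ofFn s).getD d true = false then
        ((-1 : ℚ) ^ ((List.ofFn s).count true)) •
          starIdx (wordL K (List.ofFn s) d ++ [1]) else 0)) from rfl, hkey]
  have hrotne : K.rotate d ≠ [] := by simp [List.rotate_eq_nil_iff, hK]
  obtain ⟨h0, t0, hht⟩ := List.exists_cons_of_ne_nil hrotne
  have hr1 : K.rotate (d + 1) = t0 ++ [h0] := by
    rw [← List.rotate_rotate, hht, rotate_one_cons]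
  rw [hr1, lastAdd_append, hht]
  rfl
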